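/- Let $F$ be a field equipped with a nonarchimedean absolute value $|\cdot|$ such that $0 < |2| < 1$, let $b \in F$ satisfy $b^2 = -1$, and set $Q = \begin{pmatrix} -1-b & 1-b \\ -1 & 1\end{pmatrix}$, $A = \begin{pmatrix} 2 & 0 \\ 0 & 1 \end{pmatrix}$, $\gamma_2 = Q A Q^{-1} \in GL_2(F)$. Then for every $z \in F$ with $|z - (1+b)| > |2|^{3/2}$, the Möbius image $\gamma_2 \cdot z$ is defined (its denominator is nonzero) and satisfies $|\gamma_2 \cdot z - (1-b)| < |2|^{3/2}$. That is, $\gamma_2$ maps the complement of the closed disc of radius $|2|^{3/2}$ around $1+b$ into the open disc of radius $|2|^{3/2}$ around $1-b$. -/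

import Mathlib

/-- With `0 < |2| < 1` and `b² = -1`, let
`γ₂ = Q A Q⁻¹` where `Q = !![-1-b, 1-b; -1, 1]` and `A = !![2, 0; 0, 1]`.
Then `γ₂` maps the complement of the closed disc of radius `|2|^(3/2)` around `1+b`
into the open disc of radius `|2|^(3/2)` around `1-b` (and the Möbius image is defined). -/
theorem gamma_two_maps_disc_complement {F : Type*} [Field F]
    (v : AbsoluteValue F ℝ) (hna : IsNonarchimedean v)
    (h2pos : 0 < v 2) (h2lt : v 2 < 1)
    (b : F) (hb : b ^ 2 = -1)
    (γ : Matrix (Fin 2) (Fin 2) F)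
    (hγ : γ = !![-1 - b, 1 - b; -1, 1] * !![2, 0; 0, 1] * !![-1 - b, 1 - b; -1, 1]⁻¹) :
    ∀ z : F, v 2 ^ ((3 : ℝ) / 2) < v (z - (1 + b)) →
      γ 1 0 * z + γ 1 1 ≠ 0 ∧
      v ((γ 0 0 * z + γ 0 1) / (γ 1 0 * z + γ 1 1) - (1 - b)) < v 2 ^ ((3 : ℝ) / 2) := by
  have h2 : (2 : F) ≠ 0 := by
    intro h; rw [h] at h2pos; simp at h2pos
  -- |b| = 1
  have hvb : v b = 1 := by
    have h1 : v b ^ 2 = 1 := by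
      rw [← map_pow, hb]
      rw [AbsoluteValue.map_neg, map_one]
    nlinarith [v.nonneg b]
  -- key nonarchimedean fact
  have key : ∀ x y : F, v y < v x → v (x + y) = v x := by
    intro x y h
    refine le_antisymm ((hna x y).trans (by simp [h.le])) ?_
    by_contra hlt
    push_neg at hlt
    have h1 : v x ≤ max (v (x + y)) (v y) := by
      have := hna (x + y) (-y)
      rw [AbsoluteValue.map_neg] at this
      simpa using this
    exact absurd h1 (not_le.2 (max_lt hlt h))
  -- inverse of Q
  have hQinv : (!![-1 - b, 1 - b; -1, 1] : Matrix (Fin 2) (Fin 2) F)⁻¹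
      = !![b / 2, (-1 - b) / 2; b / 2, (1 - b) / 2] := by
    apply Matrix.inv_eq_right_inv
    ext i j
    fin_cases i <;> fin_cases j <;>
      simp [Matrix.mul_apply, Fin.sum_univ_two] <;>
      field_simp <;>
      first
        | ring1
        | linear_combination (2 : F) * hb
        | linear_combination (-2 : F) * hb
        | linear_combination hb
        | linear_combination (-1 : F) * hb
        | linear_combination (3 : F) * hb
        | linear_combination (-3 : F) * hb
        | linear_combination (4 : F) * hb
        | linear_combination (-4 : F) * hb
  have hγ' : γ = !![(3 - b) / 2, b; -b / 2, (3 + b) / 2] := by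
    rw [hγ, hQinv]
    ext i j
    fin_cases i <;> fin_cases j <;>
      simp [Matrix.mul_apply, Fin.sum_univ_two] <;>
      field_simp <;>
      first
        | ring1
        | linear_combination (2 : F) * hb
        | linear_combination (-2 : F) * hb
        | linear_combination hb
        | linear_combination (-1 : F) * hb
        | linear_combination (3 : F) * hb
        | linear_combination (-3 : F) * hb
        | linear_combination (4 : F) * hb
        | linear_combination (-4 : F) * hb
  -- real estimates
  have hr32 : (0 : ℝ) < v 2 ^ ((3 : ℝ) / 2) := Real.rpow_pos_of_pos h2pos _
  have hsq : v 2 ^ (2 : ℕ) < v 2 ^ ((3 : ℝ) / 2) := by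
    have := Real.rpow_lt_rpow_of_exponent_gt h2pos h2lt (by norm_num : (3 : ℝ) / 2 < 2)
    rwa [show ((2 : ℝ)) = ((2 : ℕ) : ℝ) by norm_num, Real.rpow_natCast] at this
  have hcube : v 2 ^ ((3 : ℝ) / 2) * v 2 ^ ((3 : ℝ) / 2) = v 2 ^ (3 : ℕ) := by
    rw [← Real.rpow_add h2pos, show ((3 : ℝ) / 2 + 3 / 2) = ((3 : ℕ) : ℝ) by norm_num,
      Real.rpow_natCast]
  intro z hz
  set w : F := z - (1 + b) with hw
  have hvwpos : 0 < v w := lt_trans hr32 hz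
  -- denominator analysis
  have hv4 : v (4 : F) = v 2 ^ (2 : ℕ) := by
    rw [show (4 : F) = 2 * 2 by norm_num, map_mul]; ring
  have hvden : v (-(b * w) + 4) = v w := by
    have h1 : v (-(b * w)) = v w := by
      rw [AbsoluteValue.map_neg, map_mul, hvb, one_mul]
    rw [key (-(b * w)) 4 (by rw [h1, hv4]; exact lt_trans hsq hz), h1]
  have hdne : (-(b * w) + 4 : F) ≠ 0 := by
    intro h
    rw [h, map_zero] at hvden
    exact absurd hvden.symm (ne_of_gt hvwpos)
  have hγ10 : γ 1 0 = -b / 2 := by rw [hγ']; norm_num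
  have hγ11 : γ 1 1 = (3 + b) / 2 := by rw [hγ']; norm_num
  have hγ00 : γ 0 0 = (3 - b) / 2 := by rw [hγ']; norm_num
  have hγ01 : γ 0 1 = b := by rw [hγ']; norm_num
  have hdenom : γ 1 0 * z + γ 1 1 = (-(b * w) + 4) / 2 := by
    rw [hγ10, hγ11, hw]
    field_simp
    linear_combination (-1 : F) * hb
  have hdnz : γ 1 0 * z + γ 1 1 ≠ 0 := by
    rw [hdenom]
    exact div_ne_zero hdne h2
  refine ⟨hdnz, ?_⟩
  -- the difference identity
  have hdiff : (γ 0 0 * z + γ 0 1) / (γ 1 0 * z + γ 1 1) - (1 - b)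
      = 4 * (w + 2 * b) / (-(b * w) + 4) := by
    have hdne' := hdne
    rw [hw] at hdne'
    rw [hγ00, hγ01, hdenom, hw]
    field_simp
    ring_nf
    linear_combination (b - z) * hb
  rw [hdiff, map_div₀, map_mul, hvden, hv4]
  -- numerator estimate
  have hnum : v (w + 2 * b) ≤ max (v w) (v 2) := by
    have := hna w (2 * b)
    rwa [map_mul, hvb, mul_one] at this
  rw [div_lt_iff₀ hvwpos]
  rcases le_max_iff.mp hnum with h | h
  · calc v 2 ^ (2 : ℕ) * v (w + 2 * b) ≤ v 2 ^ (2 : ℕ) * v w := by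
          exact mul_le_mul_of_nonneg_left h (by positivity)
      _ < v 2 ^ ((3 : ℝ) / 2) * v w := by
          exact mul_lt_mul_of_pos_right hsq hvwpos
  · calc v 2 ^ (2 : ℕ) * v (w + 2 * b) ≤ v 2 ^ (2 : ℕ) * v 2 := by
          exact mul_le_mul_of_nonneg_left h (by positivity)
      _ = v 2 ^ (3 : ℕ) := by ring
      _ = v 2 ^ ((3 : ℝ) / 2) * v 2 ^ ((3 : ℝ) / 2) := hcube.symm
      _ < v 2 ^ ((3 : ℝ) / 2) * v w := mul_lt_mul_of_pos_left hz hr32
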